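/- Let R be an η-symmetric linear operator on ℝ^5 and λ1, λ2 ∈ ℝ (possibly equal). Then there do not exist vectors X1, X2, X3, X4, X5 forming a basis of ℝ^5 and satisfying the Jordan chain relations R X1 = λ1 X1, R X2 = λ1 X2 + X1, R X3 = λ1 X3 + X2, R X4 = λ2 X4, R X5 = λ2 X5 + X4. (A second order symmetric tensor on a 5-dimensional Lorentzian space cannot have Segre type [32] or its degeneracy [(32)].) -/
import Mathlib

private lemma sq4_zero {p q r s : ℝ} (h : p^2 + q^2 + r^2 + s^2 = 0) :
    p = 0 ∧ q = 0 ∧ r = 0 ∧ s = 0 := by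
  have hp : p^2 = 0 := le_antisymm (by nlinarith [sq_nonneg q, sq_nonneg r, sq_nonneg s]) (sq_nonneg p)
  have hq : q^2 = 0 := le_antisymm (by nlinarith [sq_nonneg p, sq_nonneg r, sq_nonneg s]) (sq_nonneg q)
  have hr : r^2 = 0 := le_antisymm (by nlinarith [sq_nonneg p, sq_nonneg q, sq_nonneg s]) (sq_nonneg r)
  have hs : s^2 = 0 := le_antisymm (by nlinarith [sq_nonneg p, sq_nonneg q, sq_nonneg r]) (sq_nonneg s)
  exact ⟨pow_eq_zero_iff two_ne_zero |>.mp hp, pow_eq_zero_iff two_ne_zero |>.mp hq,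
    pow_eq_zero_iff two_ne_zero |>.mp hr, pow_eq_zero_iff two_ne_zero |>.mp hs⟩

def eta (u v : Fin 5 → ℝ) : ℝ :=
  -u 0 * v 0 + u 1 * v 1 + u 2 * v 2 + u 3 * v 3 + u 4 * v 4

theorem no_segre_type_32 (R : (Fin 5 → ℝ) →ₗ[ℝ] (Fin 5 → ℝ))
    (hR : ∀ u v : Fin 5 → ℝ, eta (R u) v = eta u (R v)) (lam1 lam2 : ℝ) :
    ¬ ∃ X1 X2 X3 X4 X5 : Fin 5 → ℝ,
      (LinearIndependent ℝ ![X1, X2, X3, X4, X5] ∧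
        Submodule.span ℝ {X1, X2, X3, X4, X5} = ⊤) ∧
      R X1 = lam1 • X1 ∧
      R X2 = lam1 • X2 + X1 ∧
      R X3 = lam1 • X3 + X2 ∧
      R X4 = lam2 • X4 ∧
      R X5 = lam2 • X5 + X4 := by
  rintro ⟨X1, X2, X3, X4, X5, ⟨hli, -⟩, r1, r2, r3, r4, r5⟩
  have m12 := hR X1 X2
  have m14 := hR X1 X4
  have m24 := hR X2 X4
  have m45 := hR X4 X5
  rw [r1, r2] at m12
  rw [r1, r4] at m14
  rw [r2, r4] at m24
  rw [r4, r5] at m45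
  simp only [eta, Pi.smul_apply, Pi.add_apply, smul_eq_mul] at m12 m14 m24 m45
  have h11 : eta X1 X1 = 0 := by
    simp only [eta]; linear_combination -m12
  have h44 : eta X4 X4 = 0 := by
    simp only [eta]; linear_combination -m45
  have eq1 : (lam1 - lam2) * eta X1 X4 = 0 := by
    simp only [eta]; linear_combination m14
  have eq3 : (lam1 - lam2) * eta X2 X4 + eta X1 X4 = 0 := by
    simp only [eta]; linear_combination m24
  have h14 : eta X1 X4 = 0 := by
    have hsq : eta X1 X4 ^ 2 = 0 := by
      linear_combination eta X1 X4 * eq3 - eta X2 X4 * eq1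
    exact pow_eq_zero_iff two_ne_zero |>.mp hsq
  simp only [eta] at h11 h44 h14
  -- w = (X4 0) • X1 - (X1 0) • X4 is zero
  have hs : (X4 0 * X1 1 - X1 0 * X4 1)^2 + (X4 0 * X1 2 - X1 0 * X4 2)^2
      + (X4 0 * X1 3 - X1 0 * X4 3)^2 + (X4 0 * X1 4 - X1 0 * X4 4)^2 = 0 := by
    linear_combination (X4 0)^2 * h11 + (X1 0)^2 * h44 - 2 * (X1 0) * (X4 0) * h14
  obtain ⟨c1, c2, c3, c4⟩ := sq4_zero hs
  have hw : (X4 0) • X1 - (X1 0) • X4 = 0 := by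
    funext i
    simp only [Pi.sub_apply, Pi.smul_apply, smul_eq_mul, Pi.zero_apply]
    fin_cases i
    · show X4 0 * X1 0 - X1 0 * X4 0 = 0; ring
    · show X4 0 * X1 1 - X1 0 * X4 1 = 0; exact c1
    · show X4 0 * X1 2 - X1 0 * X4 2 = 0; exact c2
    · show X4 0 * X1 3 - X1 0 * X4 3 = 0; exact c3
    · show X4 0 * X1 4 - X1 0 * X4 4 = 0; exact c4
  have hg := Fintype.linearIndependent_iff.mp hli ![X4 0, 0, 0, -(X1 0), 0] ?_
  · have hb0 : X4 0 = 0 := by simpa using hg 0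
    have ha0 : X1 0 = 0 := by have := hg 3; simp at this; linarith
    have hsum : (X1 1)^2 + (X1 2)^2 + (X1 3)^2 + (X1 4)^2 = 0 := by
      linear_combination h11 + X1 0 * ha0
    obtain ⟨d1, d2, d3, d4⟩ := sq4_zero hsum
    have hX1 : X1 = 0 := by
      funext i
      fin_cases i
      · show X1 0 = 0; exact ha0
      · show X1 1 = 0; exact d1
      · show X1 2 = 0; exact d2
      · show X1 3 = 0; exact d3
      · show X1 4 = 0; exact d4
    exact hli.ne_zero 0 (by simpa using hX1)
  · simp only [Fin.sum_univ_five, Matrix.cons_val_zero, Matrix.cons_val_one, Matrix.head_cons,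
      Matrix.cons_val_two, Matrix.cons_val_three, Matrix.cons_val_four, Matrix.tail_cons,
      Matrix.head_fin_const]
    simpa [sub_eq_add_neg] using hw
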